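/- For every nonnegative integer n, the number of integer pairs (x,y) with 5x² + 5y² + 2x + 4y = n equals the number of integer pairs with 5x² + 5y² + 2x + 4y = 2n+1; an explicit bijection is (x,y) ↦ (y − x, −x − y − 1). -/
import Mathlib


/-- For every `n ∈ ℕ`, the number of integer pairs `(x, y)` with
`5x² + 5y² + 2x + 4y = n` equals the number with `5x² + 5y² + 2x + 4y = 2n+1`;
an explicit bijection is `(x, y) ↦ (y - x, -x - y - 1)`. -/
theorem selfconjugate_5cores_n_2n1 (n : ℕ) :
    Set.BijOn (fun p : ℤ × ℤ => (p.2 - p.1, -p.1 - p.2 - 1))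
      {p : ℤ × ℤ | 5 * p.1 ^ 2 + 5 * p.2 ^ 2 + 2 * p.1 + 4 * p.2 = n}
      {p : ℤ × ℤ | 5 * p.1 ^ 2 + 5 * p.2 ^ 2 + 2 * p.1 + 4 * p.2 = 2 * n + 1}
    ∧ Nat.card {p : ℤ × ℤ // 5 * p.1 ^ 2 + 5 * p.2 ^ 2 + 2 * p.1 + 4 * p.2 = n}
      = Nat.card {p : ℤ × ℤ //
          5 * p.1 ^ 2 + 5 * p.2 ^ 2 + 2 * p.1 + 4 * p.2 = 2 * n + 1} := by
  have hbij : Set.BijOn (fun p : ℤ × ℤ => (p.2 - p.1, -p.1 - p.2 - 1))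
      {p : ℤ × ℤ | 5 * p.1 ^ 2 + 5 * p.2 ^ 2 + 2 * p.1 + 4 * p.2 = n}
      {p : ℤ × ℤ | 5 * p.1 ^ 2 + 5 * p.2 ^ 2 + 2 * p.1 + 4 * p.2 = 2 * n + 1} := by
    refine ⟨?_, ?_, ?_⟩
    · intro p hp
      simp only [Set.mem_setOf_eq] at *
      rw [← hp]; ring
    · intro p hp q hq h
      simp only [Prod.mk.injEq] at h
      exact Prod.ext (by omega) (by omega)
    · intro q hq
      simp only [Set.mem_setOf_eq] at hq
      have h1 : q.1 ^ 2 % 2 = q.1 % 2 := by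
        have h := Int.even_pow' (m := q.1) (n := 2) (by norm_num)
        rw [Int.even_iff, Int.even_iff] at h
        omega
      have h2 : q.2 ^ 2 % 2 = q.2 % 2 := by
        have h := Int.even_pow' (m := q.2) (n := 2) (by norm_num)
        rw [Int.even_iff, Int.even_iff] at h
        omega
      obtain ⟨x, hx⟩ : ∃ x : ℤ, -q.1 - q.2 - 1 = 2 * x := by
        set a := q.1 ^ 2; set b := q.2 ^ 2
        exact ⟨(-q.1 - q.2 - 1) / 2, by omega⟩
      refine ⟨(x, q.1 + x), ?_, ?_⟩
      · simp only [Set.mem_setOf_eq]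
        have hq2 : q.2 = -2 * x - q.1 - 1 := by omega
        rw [hq2] at hq
        nlinarith [hq]
      · show (q.1 + x - x, -x - (q.1 + x) - 1) = q
        exact Prod.ext (by omega) (by omega)
  exact ⟨hbij, Nat.card_congr (hbij.equiv _)⟩
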